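/- arXiv:0910.1768 — 3 statements merged into one kernel-verified Lean document; each statement's English description precedes it below -/
import Mathlib

section
/- Let δ = ∏_{i=1}^p (i^T i^B) ∈ S_{2p}. A permutation α lies on the geodesic from the identity to δ (i.e. |α| + |αδ⁻¹| = |δ| = p) if and only if there exists a subset A ⊆ {1,…,p} such that α = ∏_{i∈A} (i^T i^B). -/
open Equiv

/-- Number of cycles of a permutation, counting fixed points as cycles. -/
def numCycles {α : Type*} [Fintype α] [DecidableEq α] (σ : Equiv.Perm α) : ℕ :=
  σ.cycleType.card + (Fintype.card α - σ.support.card)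

/-- Transposition length \`|σ| = card α - #σ\`. -/
def permLength {α : Type*} [Fintype α] [DecidableEq α] (σ : Equiv.Perm α) : ℕ :=
  Fintype.card α - numCycles σ

/-- \`S_{2p}\` acting on the symbols \`{1ᵀ,…,pᵀ,1ᴮ,…,pᴮ}\`: top indices are \`Sum.inl\`,
bottom indices are \`Sum.inr\`. \`δ = ∏ᵢ (iᵀ iᴮ)\` swaps top and bottom. -/
def deltaPerm (p : ℕ) : Perm (Fin p ⊕ Fin p) := Equiv.sumComm (Fin p) (Fin p)

namespace GeodesicAux

variable {X : Type*} [Fintype X] [DecidableEq X]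

lemma cycleType_card_le (σ : Equiv.Perm X) : σ.cycleType.card ≤ σ.support.card := by
  rw [← Equiv.Perm.sum_cycleType]
  have h : Multiset.card σ.cycleType • 1 ≤ σ.cycleType.sum :=
    Multiset.card_nsmul_le_sum
      (fun x hx => by have := Equiv.Perm.two_le_of_mem_cycleType hx; omega)
  simpa using h

lemma permLength_eq (σ : Equiv.Perm X) :
    permLength σ = σ.support.card - σ.cycleType.card := by
  have h1 : σ.support.card ≤ Fintype.card X := Finset.card_le_univ _
  have h2 := cycleType_card_le σ
  unfold permLength numCycles
  omega

lemma permLength_one : permLength (1 : Equiv.Perm X) = 0 := by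
  simp [permLength_eq, Equiv.Perm.cycleType_one, Equiv.Perm.support_one]

lemma permLength_inv (σ : Equiv.Perm X) : permLength σ⁻¹ = permLength σ := by
  simp [permLength_eq, Equiv.Perm.cycleType_inv, Equiv.Perm.support_inv]

lemma permLength_cycle {σ : Equiv.Perm X} (hσ : σ.IsCycle) :
    permLength σ + 1 = σ.support.card := by
  have h2 := hσ.two_le_card_support
  rw [permLength_eq, hσ.cycleType]
  simp only [Multiset.card_singleton]
  omega

lemma permLength_mul_disjoint {σ τ : Equiv.Perm X} (h : σ.Disjoint τ) :
    permLength (σ * τ) = permLength σ + permLength τ := by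
  have hs : (σ * τ).support.card = σ.support.card + τ.support.card := by
    rw [h.support_mul,
      Finset.card_union_of_disjoint (Equiv.Perm.disjoint_iff_disjoint_support.mp h)]
  have hc : (σ * τ).cycleType.card = σ.cycleType.card + τ.cycleType.card := by
    rw [h.cycleType_mul, Multiset.card_add]
  have := cycleType_card_le σ
  have := cycleType_card_le τ
  rw [permLength_eq, permLength_eq, permLength_eq, hs, hc]
  omega

lemma list_prod_fix {l : List (Equiv.Perm X)} {x : X} (h : ∀ t ∈ l, t x = x) :
    l.prod x = x := by
  induction l with
  | nil => simp
  | cons s rest ih =>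
    rw [List.prod_cons, Equiv.Perm.mul_apply, ih (fun t ht => h t (List.mem_cons_of_mem _ ht)),
      h s (List.mem_cons_self)]

lemma list_prod_apply_mem {l : List (Equiv.Perm X)} (hnd : l.Nodup)
    (hdisj : ∀ a ∈ l, ∀ b ∈ l, a ≠ b → _root_.Disjoint a.support b.support)
    {t : Equiv.Perm X} (ht : t ∈ l) {x : X} (hx : t x ≠ x) : l.prod x = t x := by
  induction l with
  | nil => cases ht
  | cons s rest ih =>
    obtain ⟨hs, hrest⟩ := List.nodup_cons.mp hnd
    rw [List.prod_cons, Equiv.Perm.mul_apply]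
    rcases List.mem_cons.mp ht with rfl | htr
    · have hfix : rest.prod x = x := list_prod_fix (fun r hr => by
        have hns : t ≠ r := fun e => hs (e ▸ hr)
        have hd := hdisj t (List.mem_cons_self) r (List.mem_cons_of_mem _ hr) hns
        by_contra hrx
        exact (Finset.disjoint_left.mp hd (Equiv.Perm.mem_support.mpr hx))
          (Equiv.Perm.mem_support.mpr hrx))
      rw [hfix]
    · have hrestprod : rest.prod x = t x :=
        ih hrest (fun a ha b hb => hdisj a (List.mem_cons_of_mem _ ha) b
          (List.mem_cons_of_mem _ hb)) htr
      rw [hrestprod]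
      have hts : s ≠ t := fun e => hs (e ▸ htr)
      have hd := hdisj s (List.mem_cons_self) t (List.mem_cons_of_mem _ htr) hts
      have htx : t x ∈ t.support :=
        Equiv.Perm.apply_mem_support.mpr (Equiv.Perm.mem_support.mpr hx)
      exact Equiv.Perm.notMem_support.mp (Finset.disjoint_right.mp hd htx)

lemma biUnion_card_disjoint {ι : Type*} [DecidableEq ι] (T : Finset ι) (f : ι → Finset X)
    (h : (∑ t ∈ T, (f t).card) ≤ (T.biUnion f).card) :
    ∀ a ∈ T, ∀ b ∈ T, a ≠ b → _root_.Disjoint (f a) (f b) := by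
  induction T using Finset.induction_on with
  | empty => intro a ha; cases ha
  | @insert a s ha ih =>
    rw [Finset.biUnion_insert, Finset.sum_insert ha] at h
    have h1 : (s.biUnion f).card ≤ ∑ t ∈ s, (f t).card := Finset.card_biUnion_le
    have h2 : (f a ∪ s.biUnion f).card ≤ (f a).card + (s.biUnion f).card :=
      Finset.card_union_le _ _
    have hsum : ∑ t ∈ s, (f t).card ≤ (s.biUnion f).card := by omega
    have hdisjB : _root_.Disjoint (f a) (s.biUnion f) := by
      have h3 := Finset.card_union_add_card_inter (f a) (s.biUnion f)
      have h4 : (f a ∩ s.biUnion f).card = 0 := by omega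
      rw [Finset.card_eq_zero] at h4
      exact Finset.disjoint_iff_inter_eq_empty.mpr h4
    intro b hb c hc hbc
    rcases Finset.mem_insert.mp hb with rfl | hbs
    · rcases Finset.mem_insert.mp hc with rfl | hcs
      · exact absurd rfl hbc
      · exact hdisjB.mono_right (Finset.subset_biUnion_of_mem f hcs)
    · rcases Finset.mem_insert.mp hc with rfl | hcs
      · exact (hdisjB.mono_right (Finset.subset_biUnion_of_mem f hbs)).symm
      · exact ih hsum b hbs c hcs hbc

lemma cycle_swap_factors : ∀ (n : ℕ) (f : Equiv.Perm X), f.support.card ≤ n → f.IsCycle →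
    ∃ l : List (Equiv.Perm X), (∀ t ∈ l, t.IsSwap) ∧ l.prod = f ∧
      l.length + 1 = f.support.card := by
  intro n
  induction n with
  | zero =>
    intro f hf hc
    exfalso
    have := hc.two_le_card_support
    omega
  | succ n ih =>
    intro f hf hc
    obtain ⟨x, hx, -⟩ := id hc
    by_cases hffx : f (f x) = x
    · have hfe : f = Equiv.swap x (f x) := hc.eq_swap_of_apply_apply_eq_self hx hffx
      refine ⟨[f], ?_, by simp, ?_⟩
      · intro t ht
        rw [List.mem_singleton] at ht
        exact ht ▸ ⟨x, f x, Ne.symm hx, hfe⟩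
      · rw [hfe, Equiv.Perm.card_support_swap (Ne.symm hx)]
        rfl
    · set g := Equiv.swap x (f x) * f with hg
      have hgc : g.IsCycle := hc.swap_mul hx hffx
      have hgs : g.support = f.support \ {x} := Equiv.Perm.support_swap_mul_eq f x hffx
      have hxs : x ∈ f.support := Equiv.Perm.mem_support.mpr hx
      have hcard : g.support.card + 1 = f.support.card := by
        rw [hgs, Finset.card_sdiff_of_subset (Finset.singleton_subset_iff.mpr hxs)]
        have h1 : 1 ≤ f.support.card := Finset.card_pos.mpr ⟨x, hxs⟩
        simp only [Finset.card_singleton]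
        omega
      obtain ⟨l, hl1, hl2, hl3⟩ := ih g (by omega) hgc
      refine ⟨Equiv.swap x (f x) :: l, ?_, ?_, ?_⟩
      · rintro t ht
        rcases List.mem_cons.mp ht with rfl | h
        · exact ⟨x, f x, Ne.symm hx, rfl⟩
        · exact hl1 t h
      · rw [List.prod_cons, hl2, hg, ← mul_assoc, Equiv.swap_mul_self, one_mul]
      · simp only [List.length_cons]
        omega

lemma exists_swap_factors (σ : Equiv.Perm X) :
    ∃ l : List (Equiv.Perm X), (∀ t ∈ l, t.IsSwap) ∧ l.prod = σ ∧
      l.length = permLength σ := by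
  induction σ using Equiv.Perm.cycle_induction_on with
  | base_one => exact ⟨[], by simp, by simp, by simp [permLength_one]⟩
  | base_cycles σ hσ =>
    obtain ⟨l, h1, h2, h3⟩ := cycle_swap_factors σ.support.card σ le_rfl hσ
    have := permLength_cycle hσ
    exact ⟨l, h1, h2, by omega⟩
  | induction_disjoint σ τ hd hc hσ hτ =>
    obtain ⟨l1, a1, a2, a3⟩ := hσ
    obtain ⟨l2, b1, b2, b3⟩ := hτ
    refine ⟨l1 ++ l2, ?_, by rw [List.prod_append, a2, b2], ?_⟩
    · intro t ht
      rcases List.mem_append.mp ht with h | h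
      · exact a1 t h
      · exact b1 t h
    · rw [List.length_append, permLength_mul_disjoint hd, a3, b3]

/-! ### The specific permutations on `Fin p ⊕ Fin p` -/

variable {p : ℕ}

/-- The transposition `(iᵀ iᴮ)`. -/
def pairSwap (p : ℕ) (i : Fin p) : Equiv.Perm (Fin p ⊕ Fin p) :=
  Equiv.swap (Sum.inl i) (Sum.inr i)

lemma pairSwap_inl (i : Fin p) : pairSwap p i (Sum.inl i) = Sum.inr i :=
  Equiv.swap_apply_left _ _

lemma pairSwap_inr (i : Fin p) : pairSwap p i (Sum.inr i) = Sum.inl i :=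
  Equiv.swap_apply_right _ _

lemma pairSwap_fix_inl {i j : Fin p} (h : i ≠ j) : pairSwap p j (Sum.inl i) = Sum.inl i :=
  Equiv.swap_apply_of_ne_of_ne (by simp [h]) (by simp)

lemma pairSwap_fix_inr {i j : Fin p} (h : i ≠ j) : pairSwap p j (Sum.inr i) = Sum.inr i :=
  Equiv.swap_apply_of_ne_of_ne (by simp) (by simp [h])

lemma listProd_eval (m : List (Fin p)) (hm : m.Nodup) (i : Fin p) :
    ((m.map (pairSwap p)).prod (Sum.inl i) =
      if i ∈ m then Sum.inr i else Sum.inl i) ∧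
    ((m.map (pairSwap p)).prod (Sum.inr i) =
      if i ∈ m then Sum.inl i else Sum.inr i) := by
  induction m with
  | nil => simp
  | cons j rest ih =>
    obtain ⟨hj, hrest⟩ := List.nodup_cons.mp hm
    obtain ⟨ih1, ih2⟩ := ih hrest
    rw [List.map_cons, List.prod_cons]
    by_cases hij : i = j
    · subst hij
      rw [Equiv.Perm.mul_apply, Equiv.Perm.mul_apply, ih1, ih2, if_neg hj, if_neg hj,
        if_pos (List.mem_cons_self), if_pos (List.mem_cons_self)]
      exact ⟨pairSwap_inl i, pairSwap_inr i⟩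
    · have hmem : (i ∈ j :: rest) ↔ i ∈ rest := by simp [hij]
      rw [Equiv.Perm.mul_apply, Equiv.Perm.mul_apply, ih1, ih2]
      by_cases h : i ∈ rest
      · rw [if_pos h, if_pos (hmem.mpr h), if_pos h, if_pos (hmem.mpr h)]
        exact ⟨pairSwap_fix_inr hij, pairSwap_fix_inl hij⟩
      · rw [if_neg h, if_neg (fun hh => h (hmem.mp hh)), if_neg h,
          if_neg (fun hh => h (hmem.mp hh))]
        exact ⟨pairSwap_fix_inl hij, pairSwap_fix_inr hij⟩

lemma pairSwap_disjoint_listProd {j : Fin p} {rest : List (Fin p)} (hrest : rest.Nodup)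
    (hj : j ∉ rest) : (pairSwap p j).Disjoint (rest.map (pairSwap p)).prod := by
  intro x
  rcases x with i | i
  · by_cases hij : i = j
    · subst hij
      right
      rw [(listProd_eval rest hrest i).1, if_neg hj]
    · left
      exact pairSwap_fix_inl hij
  · by_cases hij : i = j
    · subst hij
      right
      rw [(listProd_eval rest hrest i).2, if_neg hj]
    · left
      exact pairSwap_fix_inr hij

lemma listProd_cycleType (m : List (Fin p)) (hm : m.Nodup) :
    (m.map (pairSwap p)).prod.cycleType = Multiset.replicate m.length 2 := by
  induction m with
  | nil => simp [Equiv.Perm.cycleType_one]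
  | cons j rest ih =>
    obtain ⟨hj, hrest⟩ := List.nodup_cons.mp hm
    have hdisj := pairSwap_disjoint_listProd hrest hj
    rw [List.map_cons, List.prod_cons, hdisj.cycleType_mul, ih hrest]
    have hne : (Sum.inl j : Fin p ⊕ Fin p) ≠ Sum.inr j := by simp
    have hswap : (pairSwap p j).cycleType = {2} := by
      have hpc : (pairSwap p j).IsCycle := Equiv.Perm.isCycle_swap hne
      rw [hpc.cycleType]
      have hcs : (pairSwap p j).support.card = 2 := Equiv.Perm.card_support_swap hne
      rw [hcs]
    rw [hswap, List.length_cons, Multiset.replicate_succ, ← Multiset.singleton_add]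

lemma listProd_permLength (m : List (Fin p)) (hm : m.Nodup) :
    permLength (m.map (pairSwap p)).prod = m.length := by
  have hct := listProd_cycleType m hm
  have hs : (m.map (pairSwap p)).prod.support.card = 2 * m.length := by
    rw [← Equiv.Perm.sum_cycleType, hct, Multiset.sum_replicate, smul_eq_mul]
    ring
  rw [permLength_eq, hct, hs, Multiset.card_replicate]
  omega

lemma card_sum_fin : Fintype.card (Fin p ⊕ Fin p) = 2 * p := by
  simp [Fintype.card_sum]
  ring

lemma delta_eq : deltaPerm p = ((List.finRange p).map (pairSwap p)).prod := by
  apply Equiv.ext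
  rintro (i | i)
  · rw [(listProd_eval _ (List.nodup_finRange p) i).1, if_pos (List.mem_finRange i)]
    rfl
  · rw [(listProd_eval _ (List.nodup_finRange p) i).2, if_pos (List.mem_finRange i)]
    rfl

lemma delta_inv : (deltaPerm p)⁻¹ = deltaPerm p := rfl

lemma exists_preimage_list (l : List (Equiv.Perm (Fin p ⊕ Fin p)))
    (h : ∀ t ∈ l, ∃ i, t = pairSwap p i) : ∃ m : List (Fin p), l = m.map (pairSwap p) := by
  induction l with
  | nil => exact ⟨[], rfl⟩
  | cons t rest ih =>
    obtain ⟨i, hi⟩ := h t (List.mem_cons_self)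
    obtain ⟨m, hm⟩ := ih (fun s hs => h s (List.mem_cons_of_mem _ hs))
    exact ⟨i :: m, by rw [List.map_cons, ← hi, ← hm]⟩

end GeodesicAux

open GeodesicAux

/-- `α` lies on the geodesic from the identity to `δ` iff `α = ∏_{i ∈ A} (iᵀ iᴮ)`
for some subset `A ⊆ {1,…,p}`. -/
theorem geodesic_to_delta_iff (p : ℕ) :
    permLength (deltaPerm p) = p ∧
    ∀ α : Perm (Fin p ⊕ Fin p),
      permLength α + permLength (α * (deltaPerm p)⁻¹) = p ↔
      ∃ A : Finset (Fin p), ∀ i : Fin p,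
        (α (Sum.inl i) = if i ∈ A then Sum.inr i else Sum.inl i) ∧
        (α (Sum.inr i) = if i ∈ A then Sum.inl i else Sum.inr i) := by
  have hδlen : permLength (deltaPerm p) = p := by
    rw [delta_eq, listProd_permLength _ (List.nodup_finRange p), List.length_finRange]
  refine ⟨hδlen, fun α => ⟨?_, ?_⟩⟩
  · -- hard direction
    intro h
    obtain ⟨l1, s1, p1, n1⟩ := exists_swap_factors (α * (deltaPerm p)⁻¹)⁻¹
    obtain ⟨l2, s2, p2, n2⟩ := exists_swap_factors α
    set l := l1 ++ l2 with hl
    have hprod : l.prod = deltaPerm p := by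
      rw [hl, List.prod_append, p1, p2, mul_inv_rev, inv_inv, mul_assoc,
        inv_mul_cancel, mul_one]
    have hlen : l.length = p := by
      rw [hl, List.length_append, n1, permLength_inv, n2]
      omega
    have hs : ∀ t ∈ l, t.IsSwap := by
      intro t ht
      rcases List.mem_append.mp ht with h' | h'
      · exact s1 t h'
      · exact s2 t h'
    have hδmove : ∀ x : Fin p ⊕ Fin p, deltaPerm p x ≠ x := by
      rintro (i | i) hx <;> simp [deltaPerm] at hx
    have hcover : ∀ x : Fin p ⊕ Fin p, ∃ t ∈ l, t x ≠ x := by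
      intro x
      by_contra hne
      push_neg at hne
      have := list_prod_fix hne
      rw [hprod] at this
      exact hδmove x this
    have hsub : (Finset.univ : Finset (Fin p ⊕ Fin p)) ⊆
        l.toFinset.biUnion Equiv.Perm.support := by
      intro x _
      obtain ⟨t, htl, htx⟩ := hcover x
      exact Finset.mem_biUnion.mpr
        ⟨t, List.mem_toFinset.mpr htl, Equiv.Perm.mem_support.mpr htx⟩
    have hsum : ∑ t ∈ l.toFinset, t.support.card = 2 * l.toFinset.card := by
      rw [Finset.sum_congr rfl (fun t ht => ?_), Finset.sum_const, smul_eq_mul, mul_comm]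
      obtain ⟨x, y, hxy, rfl⟩ := hs t (List.mem_toFinset.mp ht)
      exact Equiv.Perm.card_support_swap hxy
    have hcard1 : 2 * p ≤ (l.toFinset.biUnion Equiv.Perm.support).card := by
      have := Finset.card_le_card hsub
      rwa [Finset.card_univ, card_sum_fin] at this
    have hcard2 : (l.toFinset.biUnion Equiv.Perm.support).card ≤ 2 * l.toFinset.card := by
      calc (l.toFinset.biUnion Equiv.Perm.support).card
          ≤ ∑ t ∈ l.toFinset, t.support.card := Finset.card_biUnion_le
        _ = 2 * l.toFinset.card := hsum
    have hlen2 : l.toFinset.card ≤ l.length := List.toFinset_card_le l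
    have hcardT : l.toFinset.card = p := by omega
    have hnd : l.Nodup := by
      have hd1 : l.dedup.length = l.length := by
        rw [← List.card_toFinset, hcardT, hlen]
      have h2 := (List.dedup_sublist l).eq_of_length hd1
      rw [← h2]
      exact List.nodup_dedup l
    have hdisj : ∀ a ∈ l.toFinset, ∀ b ∈ l.toFinset, a ≠ b →
        _root_.Disjoint a.support b.support := by
      apply biUnion_card_disjoint
      rw [hsum, hcardT]
      omega
    have hdisj' : ∀ a ∈ l, ∀ b ∈ l, a ≠ b → _root_.Disjoint a.support b.support :=
      fun a ha b hb => hdisj a (List.mem_toFinset.mpr ha) b (List.mem_toFinset.mpr hb)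
    have hform : ∀ t ∈ l, ∃ i : Fin p, t = pairSwap p i := by
      intro t htl
      obtain ⟨x, y, hxy, rfl⟩ := hs t htl
      have hx : (Equiv.swap x y) x ≠ x := by
        rw [Equiv.swap_apply_left]
        exact Ne.symm hxy
      have hval : l.prod x = Equiv.swap x y x := list_prod_apply_mem hnd hdisj' htl hx
      rw [hprod, Equiv.swap_apply_left] at hval
      rcases x with i | i
      · have hy : y = Sum.inr i := by
          have : deltaPerm p (Sum.inl i) = Sum.inr i := rfl
          rw [this] at hval
          exact hval.symm
        exact ⟨i, by rw [hy]; rfl⟩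
      · have hy : y = Sum.inl i := by
          have : deltaPerm p (Sum.inr i) = Sum.inl i := rfl
          rw [this] at hval
          exact hval.symm
        exact ⟨i, by rw [hy, Equiv.swap_comm]; rfl⟩
    obtain ⟨m, hm⟩ := exists_preimage_list l2
      (fun t ht => hform t (List.mem_append_right _ ht))
    have hl2nd : l2.Nodup := ((List.nodup_append.mp (hl ▸ hnd)).2.1)
    have hmnd : m.Nodup := List.Nodup.of_map _ (hm ▸ hl2nd)
    refine ⟨m.toFinset, fun i => ?_⟩
    have heval := listProd_eval m hmnd i
    rw [← hm, p2] at heval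
    simpa [List.mem_toFinset] using heval
  · -- easy direction
    rintro ⟨A, hA⟩
    have hα : α = (A.toList.map (pairSwap p)).prod := by
      apply Equiv.ext
      rintro (i | i)
      · rw [(listProd_eval A.toList A.nodup_toList i).1, (hA i).1]
        simp [Finset.mem_toList]
      · rw [(listProd_eval A.toList A.nodup_toList i).2, (hA i).2]
        simp [Finset.mem_toList]
    have hβ : α * (deltaPerm p)⁻¹ = (Aᶜ.toList.map (pairSwap p)).prod := by
      apply Equiv.ext
      rintro (i | i)
      · have h1 : (α * (deltaPerm p)⁻¹) (Sum.inl i) = α (Sum.inr i) := rfl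
        rw [h1, (hA i).2, (listProd_eval Aᶜ.toList Aᶜ.nodup_toList i).1]
        by_cases h : i ∈ A <;> simp [Finset.mem_toList, Finset.mem_compl, h]
      · have h1 : (α * (deltaPerm p)⁻¹) (Sum.inr i) = α (Sum.inl i) := rfl
        rw [h1, (hA i).1, (listProd_eval Aᶜ.toList Aᶜ.nodup_toList i).2]
        by_cases h : i ∈ A <;> simp [Finset.mem_toList, Finset.mem_compl, h]
    rw [hβ, hα, listProd_permLength _ A.nodup_toList,
      listProd_permLength _ Aᶜ.nodup_toList, Finset.length_toList, Finset.length_toList]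
    have h1 : Aᶜ.card = p - A.card := by
      rw [Finset.card_compl, Fintype.card_fin]
    have h2 : A.card ≤ p := by
      have := Finset.card_le_univ A
      rwa [Fintype.card_fin] at this
    omega
end

section
/- Let ν_n be a sequence of probability measures on ℝ converging in moments to a compactly supported probability measure ν (i.e. ∫x^p dν_n → ∫x^p dν for every nonnegative integer p, and all these moments are finite). Then for every continuous function f : ℝ → ℝ of polynomial growth (i.e. |f(x)| ≤ C(1+|x|^q) for some C, q), ∫ f dν_n → ∫ f dν. -/
open MeasureTheory Filter

lemma aux_pow_le (x : ℝ) {i d : ℕ} (h : i ≤ d) : |x| ^ i ≤ 1 + |x| ^ d := by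
  rcases le_or_gt |x| 1 with hx | hx
  · have h1 : |x| ^ i ≤ 1 := pow_le_one₀ (abs_nonneg x) hx
    have h2 : (0:ℝ) ≤ |x| ^ d := pow_nonneg (abs_nonneg x) d
    linarith
  · have h1 : |x| ^ i ≤ |x| ^ d := pow_le_pow_right₀ hx.le h
    linarith

lemma poly_bound (P : Polynomial ℝ) : ∃ D : ℝ, 0 ≤ D ∧
    ∀ x : ℝ, |P.eval x| ≤ D * (1 + |x| ^ P.natDegree) := by
  refine ⟨∑ i ∈ Finset.range (P.natDegree + 1), |P.coeff i|,
    Finset.sum_nonneg fun i _ => abs_nonneg _, fun x => ?_⟩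
  rw [Polynomial.eval_eq_sum_range]
  calc |∑ i ∈ Finset.range (P.natDegree + 1), P.coeff i * x ^ i|
      ≤ ∑ i ∈ Finset.range (P.natDegree + 1), |P.coeff i * x ^ i| :=
        Finset.abs_sum_le_sum_abs _ _
    _ ≤ ∑ i ∈ Finset.range (P.natDegree + 1), |P.coeff i| * (1 + |x| ^ P.natDegree) := by
        apply Finset.sum_le_sum
        intro i hi
        rw [abs_mul, abs_pow]
        exact mul_le_mul_of_nonneg_left
          (aux_pow_le x (Nat.lt_succ_iff.mp (Finset.mem_range.mp hi))) (abs_nonneg _)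
    _ = _ := by rw [← Finset.sum_mul]

lemma integrable_abs_pow (μ : Measure ℝ) (hint : ∀ p : ℕ, Integrable (fun x => x ^ p) μ)
    (p : ℕ) : Integrable (fun x : ℝ => |x| ^ p) μ := by
  simpa [abs_pow] using (hint p).abs

lemma integrable_poly_growth (μ : Measure ℝ) [IsFiniteMeasure μ]
    (hint : ∀ p : ℕ, Integrable (fun x => x ^ p) μ) {g : ℝ → ℝ} (hg : Continuous g)
    {C : ℝ} {q : ℕ} (hb : ∀ x, |g x| ≤ C * (1 + |x| ^ q)) : Integrable g μ := by
  have h1 : Integrable (fun x : ℝ => C * (1 + |x| ^ q)) μ :=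
    ((integrable_const 1).add (integrable_abs_pow μ hint q)).const_mul C
  exact h1.mono' hg.aestronglyMeasurable (Eventually.of_forall fun x => by
    rw [Real.norm_eq_abs]; exact hb x)

lemma integral_poly_eq (μ : Measure ℝ) (hint : ∀ p : ℕ, Integrable (fun x => x ^ p) μ)
    (P : Polynomial ℝ) :
    ∫ x, P.eval x ∂μ = ∑ i ∈ Finset.range (P.natDegree + 1), P.coeff i * ∫ x, x ^ i ∂μ := by
  have h : (fun x : ℝ => P.eval x) =
      fun x => ∑ i ∈ Finset.range (P.natDegree + 1), P.coeff i * x ^ i := by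
    funext x; rw [Polynomial.eval_eq_sum_range]
  rw [h, integral_finset_sum _ fun i _ => (hint i).const_mul _]
  simp_rw [integral_const_mul]

lemma integrable_poly (μ : Measure ℝ) (hint : ∀ p : ℕ, Integrable (fun x => x ^ p) μ)
    (P : Polynomial ℝ) : Integrable (fun x => P.eval x) μ := by
  have h : (fun x : ℝ => P.eval x) =
      fun x => ∑ i ∈ Finset.range (P.natDegree + 1), P.coeff i * x ^ i := by
    funext x; rw [Polynomial.eval_eq_sum_range]
  rw [h]
  exact integrable_finset_sum _ fun i _ => (hint i).const_mul _

lemma tail_bound (μ : Measure ℝ) (hint : ∀ p : ℕ, Integrable (fun x => x ^ p) μ)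
    {M : ℝ} (hM : 0 < M) (q k m : ℕ) (hqk : q + k = 2 * m) :
    ∫ x in (Set.Icc (-M) M)ᶜ, |x| ^ q ∂μ ≤ (∫ x, x ^ (2 * m) ∂μ) / M ^ k := by
  have hmeas : MeasurableSet (Set.Icc (-M) M)ᶜ := measurableSet_Icc.compl
  have habs := integrable_abs_pow μ hint
  have step1 : ∫ x in (Set.Icc (-M) M)ᶜ, |x| ^ q ∂μ
      ≤ ∫ x in (Set.Icc (-M) M)ᶜ, |x| ^ (2 * m) / M ^ k ∂μ := by
    apply setIntegral_mono_on (habs q).integrableOn (((habs (2*m)).div_const _).integrableOn) hmeas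
    intro x hx
    have hxM : M ≤ |x| := by
      simp only [Set.mem_compl_iff, Set.mem_Icc, not_and_or, not_le] at hx
      rcases hx with h | h
      · rw [abs_of_neg (by linarith)]; linarith
      · rw [abs_of_pos (by linarith)]; linarith
    rw [le_div_iff₀ (by positivity)]
    calc |x| ^ q * M ^ k ≤ |x| ^ q * |x| ^ k :=
          mul_le_mul_of_nonneg_left (pow_le_pow_left₀ hM.le hxM k) (pow_nonneg (abs_nonneg x) q)
      _ = |x| ^ (2 * m) := by rw [← pow_add, hqk]
  have step2 : ∫ x in (Set.Icc (-M) M)ᶜ, |x| ^ (2 * m) / M ^ k ∂μ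
      ≤ ∫ x, |x| ^ (2 * m) / M ^ k ∂μ := by
    apply setIntegral_le_integral ((habs (2*m)).div_const _)
    exact Eventually.of_forall fun x => by positivity
  have heq : ∫ x, |x| ^ (2 * m) / M ^ k ∂μ = (∫ x, x ^ (2 * m) ∂μ) / M ^ k := by
    rw [integral_div]
    congr 1
    apply integral_congr_ae
    apply Eventually.of_forall
    intro x
    show |x| ^ (2 * m) = x ^ (2 * m)
    rw [pow_mul, pow_mul, sq_abs]
  linarith [heq ▸ step2]

lemma moment_le (μ : Measure ℝ) [IsProbabilityMeasure μ] {R : ℝ} (hR : 0 ≤ R)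
    (h0 : μ (Set.Icc (-R) R)ᶜ = 0) (hint : ∀ p : ℕ, Integrable (fun x => x ^ p) μ)
    (p : ℕ) : ∫ x, x ^ p ∂μ ≤ R ^ p := by
  have hsplit : (∫ x in Set.Icc (-R) R, x ^ p ∂μ) + ∫ x in (Set.Icc (-R) R)ᶜ, x ^ p ∂μ
      = ∫ x, x ^ p ∂μ := integral_add_compl measurableSet_Icc (hint p)
  have hz : ∫ x in (Set.Icc (-R) R)ᶜ, (x:ℝ) ^ p ∂μ = 0 := by
    rw [Measure.restrict_eq_zero.mpr h0, integral_zero_measure]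
  have hb : ‖∫ x in Set.Icc (-R) R, x ^ p ∂μ‖ ≤ R ^ p * (μ (Set.Icc (-R) R)).toReal := by
    apply norm_setIntegral_le_of_norm_le_const (measure_lt_top μ _)
    · intro x hx
      rw [Real.norm_eq_abs, abs_pow]
      exact pow_le_pow_left₀ (abs_nonneg x) (abs_le.mpr ⟨hx.1, hx.2⟩) p
  have h1 : (μ (Set.Icc (-R) R)).toReal ≤ 1 := by
    simpa using ENNReal.toReal_mono (by simp) (prob_le_one (μ := μ) (s := Set.Icc (-R) R))
  have h2 : ∫ x in Set.Icc (-R) R, x ^ p ∂μ ≤ R ^ p := by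
    calc ∫ x in Set.Icc (-R) R, x ^ p ∂μ ≤ ‖∫ x in Set.Icc (-R) R, x ^ p ∂μ‖ := le_abs_self _
      _ ≤ R ^ p * (μ (Set.Icc (-R) R)).toReal := hb
      _ ≤ R ^ p * 1 := by
          exact mul_le_mul_of_nonneg_left h1 (pow_nonneg hR p)
      _ = R ^ p := mul_one _
  linarith

/-- If probability measures `ν n` converge in moments to a compactly supported probability
measure `ν`, then `∫ f dν_n → ∫ f dν` for every continuous `f` of polynomial growth. -/
theorem tendsto_integral_of_moments (ν : ℕ → Measure ℝ) (νlim : Measure ℝ)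
    [∀ n, IsProbabilityMeasure (ν n)] [IsProbabilityMeasure νlim]
    (hint : ∀ n (p : ℕ), Integrable (fun x => x ^ p) (ν n))
    (hintlim : ∀ p : ℕ, Integrable (fun x => x ^ p) νlim)
    (hcpt : ∃ s : Set ℝ, IsCompact s ∧ νlim sᶜ = 0)
    (hmom : ∀ p : ℕ,
      Tendsto (fun n => ∫ x, x ^ p ∂(ν n)) atTop (nhds (∫ x, x ^ p ∂νlim)))
    (f : ℝ → ℝ) (hf : Continuous f)
    (hgrowth : ∃ (C : ℝ) (q : ℕ), ∀ x : ℝ, |f x| ≤ C * (1 + |x| ^ q)) :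
    Tendsto (fun n => ∫ x, f x ∂(ν n)) atTop (nhds (∫ x, f x ∂νlim)) := by
  -- normalize the growth bound
  obtain ⟨C₀, q₀, hg₀⟩ := hgrowth
  set C : ℝ := |C₀| + 1 with hCdef
  have hC0 : 0 ≤ C := by positivity
  set q : ℕ := q₀ with hqdef
  have hgf : ∀ x : ℝ, |f x| ≤ C * (1 + |x| ^ q) := fun x => by
    have h1 := hg₀ x
    have h2 : C₀ * (1 + |x| ^ q₀) ≤ C * (1 + |x| ^ q₀) := by
      apply mul_le_mul_of_nonneg_right _ (by positivity)
      have := le_abs_self C₀; simp [hCdef]; linarith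
    exact h1.trans h2
  -- support of νlim inside [-R, R]
  obtain ⟨s, hs, hs0⟩ := hcpt
  obtain ⟨r, hr⟩ := hs.isBounded.subset_closedBall 0
  set R : ℝ := max r 1 with hRdef
  have hR1 : (1:ℝ) ≤ R := le_max_right _ _
  have hR0 : (0:ℝ) ≤ R := by linarith
  have hRnull : νlim (Set.Icc (-R) R)ᶜ = 0 := by
    apply measure_mono_null _ hs0
    apply Set.compl_subset_compl.mpr
    intro x hx
    have h := hr hx
    rw [Metric.mem_closedBall, Real.dist_eq, sub_zero] at h
    have : |x| ≤ R := h.trans (le_max_left _ _)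
    exact Set.mem_Icc.mpr (abs_le.mp this)
  set M : ℝ := R + 1 with hMdef
  have hM0 : 0 < M := by linarith
  have hM1 : (1:ℝ) ≤ M := by linarith
  have hRM : R < M := by linarith
  -- ε-argument
  rw [Metric.tendsto_atTop]
  intro ε hε
  have hε5 : 0 < ε / 5 := by linarith
  -- Weierstrass approximation on [-M, M]
  obtain ⟨P, hP⟩ := exists_polynomial_near_of_continuousOn (-M) M f hf.continuousOn (ε/5) hε5
  set g : ℝ → ℝ := fun x => f x - P.eval x with hgdef
  have hgcont : Continuous g := hf.sub P.continuous
  obtain ⟨D, hD0, hPD⟩ := poly_bound P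
  set d : ℕ := P.natDegree with hddef
  set q'' : ℕ := max q d with hq''def
  set E : ℝ := 2 * (C + D) with hEdef
  have hE0 : 0 ≤ E := by positivity
  have hgb : ∀ x : ℝ, |g x| ≤ E * (1 + |x| ^ q'') := by
    intro x
    have h1 : |g x| ≤ |f x| + |P.eval x| := abs_sub _ _
    have h2 : |x| ^ q ≤ 1 + |x| ^ q'' := aux_pow_le x (le_max_left _ _)
    have h3 : |x| ^ d ≤ 1 + |x| ^ q'' := aux_pow_le x (le_max_right _ _)
    have h4 := hgf x
    have h5 := hPD x
    have h6 : (0:ℝ) ≤ |x| ^ q'' := pow_nonneg (abs_nonneg x) _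
    nlinarith
  set F : ℝ := 2 * E with hFdef
  have hF0 : 0 ≤ F := by positivity
  have hgtail : ∀ x ∈ (Set.Icc (-M) M)ᶜ, |g x| ≤ F * |x| ^ q'' := by
    intro x hx
    have hxM : M ≤ |x| := by
      simp only [Set.mem_compl_iff, Set.mem_Icc, not_and_or, not_le] at hx
      rcases hx with h | h
      · rw [abs_of_neg (by linarith)]; linarith
      · rw [abs_of_pos (by linarith)]; linarith
    have h1 : (1:ℝ) ≤ |x| ^ q'' := one_le_pow₀ (by linarith)
    have := hgb x
    nlinarith
  -- choose the moment order m
  have hrlt : (R / M) ^ 2 < 1 := by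
    apply pow_lt_one₀ (by positivity) _ (by norm_num)
    rw [div_lt_one hM0]; exact hRM
  have htend : Tendsto (fun m : ℕ => (2 * F * M ^ q'') * ((R / M) ^ 2) ^ m) atTop (nhds 0) := by
    have h := tendsto_pow_atTop_nhds_zero_of_lt_one (by positivity : (0:ℝ) ≤ (R / M) ^ 2) hrlt
    simpa using h.const_mul (2 * F * M ^ q'')
  obtain ⟨m, hmb, hmq⟩ :=
    ((htend.eventually (gt_mem_nhds hε5)).and (eventually_ge_atTop q'')).exists
  set k : ℕ := 2 * m - q'' with hkdef
  have hqk : q'' + k = 2 * m := by omega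
  set L : ℝ := ∫ x, x ^ (2 * m) ∂νlim with hLdef
  have hL : L ≤ R ^ (2 * m) := moment_le νlim hR0 hRnull hintlim (2 * m)
  -- the bound F * (L + 1) / M ^ k is < ε / 5
  have hRm1 : (1:ℝ) ≤ R ^ (2 * m) := one_le_pow₀ hR1
  have hMk0 : (0:ℝ) < M ^ k := by positivity
  have hMpow : (M:ℝ) ^ q'' * M ^ k = M ^ (2 * m) := by rw [← pow_add, hqk]
  have hkey : F * (L + 1) / M ^ k < ε / 5 := by
    have e1 : ((R / M) ^ 2) ^ m = R ^ (2 * m) / M ^ (2 * m) := by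
      rw [← pow_mul, div_pow]
    have e2 : (2 * F * M ^ q'') * ((R / M) ^ 2) ^ m = 2 * F * R ^ (2 * m) / M ^ k := by
      rw [e1, ← hMpow]
      field_simp
    have h3 : F * (L + 1) ≤ 2 * F * R ^ (2 * m) := by nlinarith
    have h4 : F * (L + 1) / M ^ k ≤ 2 * F * R ^ (2 * m) / M ^ k :=
      (div_le_div_iff_of_pos_right hMk0).mpr h3
    calc F * (L + 1) / M ^ k ≤ 2 * F * R ^ (2 * m) / M ^ k := h4
      _ = (2 * F * M ^ q'') * ((R / M) ^ 2) ^ m := e2.symm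
      _ < ε / 5 := hmb
  -- eventual bounds in n
  have hev1 : ∀ᶠ n in atTop, ∫ x, x ^ (2 * m) ∂(ν n) < L + 1 :=
    (hmom (2 * m)).eventually (gt_mem_nhds (lt_add_one L))
  have hpoly : Tendsto (fun n => ∫ x, P.eval x ∂(ν n)) atTop (nhds (∫ x, P.eval x ∂νlim)) := by
    have h : ∀ μ : Measure ℝ, (∀ p : ℕ, Integrable (fun x => x ^ p) μ) →
        ∫ x, P.eval x ∂μ = ∑ i ∈ Finset.range (P.natDegree + 1), P.coeff i * ∫ x, x ^ i ∂μ :=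
      fun μ h => integral_poly_eq μ h P
    have h1 : (fun n => ∫ x, P.eval x ∂(ν n)) =
        fun n => ∑ i ∈ Finset.range (P.natDegree + 1), P.coeff i * ∫ x, x ^ i ∂(ν n) := by
      funext n; exact h (ν n) (hint n)
    rw [h1, h νlim hintlim]
    exact tendsto_finset_sum _ fun i _ => (hmom i).const_mul _
  have hev2 : ∀ᶠ n in atTop,
      |(∫ x, P.eval x ∂(ν n)) - ∫ x, P.eval x ∂νlim| < ε / 5 := by
    have := hpoly.eventually (Metric.ball_mem_nhds (∫ x, P.eval x ∂νlim) hε5)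
    filter_upwards [this] with n hn
    rwa [Real.dist_eq] at hn
  obtain ⟨N, hN⟩ := eventually_atTop.mp (hev1.and hev2)
  refine ⟨N, fun n hn => ?_⟩
  obtain ⟨hn1, hn2⟩ := hN n hn
  -- integrability facts
  have hgint : Integrable g (ν n) :=
    integrable_poly_growth (ν n) (hint n) hgcont hgb
  have hgintlim : Integrable g νlim :=
    integrable_poly_growth νlim hintlim hgcont hgb
  have hPint : Integrable (fun x => P.eval x) (ν n) := integrable_poly (ν n) (hint n) P
  have hPintlim : Integrable (fun x => P.eval x) νlim := integrable_poly νlim hintlim P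
  -- decompose the integrals
  have hfeq : ∀ (μ : Measure ℝ), Integrable g μ → Integrable (fun x => P.eval x) μ →
      ∫ x, f x ∂μ = (∫ x, g x ∂μ) + ∫ x, P.eval x ∂μ := by
    intro μ h1 h2
    rw [← integral_add h1 h2]
    congr 1
    funext x
    simp [hgdef]
  rw [Real.dist_eq, hfeq (ν n) hgint hPint, hfeq νlim hgintlim hPintlim]
  -- bound |∫ g dνlim| ≤ ε/5
  have hglim : |∫ x, g x ∂νlim| ≤ ε / 5 := by
    have hsplit : (∫ x in Set.Icc (-R) R, g x ∂νlim) + ∫ x in (Set.Icc (-R) R)ᶜ, g x ∂νlim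
        = ∫ x, g x ∂νlim := integral_add_compl measurableSet_Icc hgintlim
    have hz : ∫ x in (Set.Icc (-R) R)ᶜ, g x ∂νlim = 0 := by
      rw [Measure.restrict_eq_zero.mpr hRnull, integral_zero_measure]
    have hb : ‖∫ x in Set.Icc (-R) R, g x ∂νlim‖
        ≤ (ε / 5) * (νlim (Set.Icc (-R) R)).toReal := by
      apply norm_setIntegral_le_of_norm_le_const (measure_lt_top νlim _)
      · intro x hx
        rw [Real.norm_eq_abs]
        have hxM : x ∈ Set.Icc (-M) M := by
          simp only [Set.mem_Icc] at hx ⊢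
          constructor <;> [linarith [hx.1]; linarith [hx.2]]
        have := hP x hxM
        rw [abs_sub_comm] at this
        exact this.le
    have h1 : (νlim (Set.Icc (-R) R)).toReal ≤ 1 := by
      simpa using ENNReal.toReal_mono (by simp)
        (prob_le_one (μ := νlim) (s := Set.Icc (-R) R))
    calc |∫ x, g x ∂νlim| = ‖∫ x in Set.Icc (-R) R, g x ∂νlim‖ := by
          rw [← hsplit, hz, add_zero, Real.norm_eq_abs]
      _ ≤ (ε / 5) * (νlim (Set.Icc (-R) R)).toReal := hb
      _ ≤ (ε / 5) * 1 := mul_le_mul_of_nonneg_left h1 hε5.le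
      _ = ε / 5 := mul_one _
  -- bound |∫ g dν n| ≤ ε/5 + F * (L + 1) / M ^ k
  have hgn : |∫ x, g x ∂(ν n)| ≤ ε / 5 + F * (L + 1) / M ^ k := by
    have hsplit : (∫ x in Set.Icc (-M) M, g x ∂(ν n)) + ∫ x in (Set.Icc (-M) M)ᶜ, g x ∂(ν n)
        = ∫ x, g x ∂(ν n) := integral_add_compl measurableSet_Icc hgint
    have hb1 : |∫ x in Set.Icc (-M) M, g x ∂(ν n)| ≤ ε / 5 := by
      have hb : ‖∫ x in Set.Icc (-M) M, g x ∂(ν n)‖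
          ≤ (ε / 5) * ((ν n) (Set.Icc (-M) M)).toReal := by
        apply norm_setIntegral_le_of_norm_le_const (measure_lt_top (ν n) _)
        · intro x hx
          rw [Real.norm_eq_abs]
          have := hP x hx
          rw [abs_sub_comm] at this
          exact this.le
      have h1 : ((ν n) (Set.Icc (-M) M)).toReal ≤ 1 := by
        simpa using ENNReal.toReal_mono (by simp)
          (prob_le_one (μ := ν n) (s := Set.Icc (-M) M))
      calc |∫ x in Set.Icc (-M) M, g x ∂(ν n)| ≤ (ε / 5) * ((ν n) (Set.Icc (-M) M)).toReal := hb
        _ ≤ (ε / 5) * 1 := mul_le_mul_of_nonneg_left h1 hε5.le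
        _ = ε / 5 := mul_one _
    have hb2 : |∫ x in (Set.Icc (-M) M)ᶜ, g x ∂(ν n)| ≤ F * (L + 1) / M ^ k := by
      have habs := integrable_abs_pow (ν n) (hint n)
      calc |∫ x in (Set.Icc (-M) M)ᶜ, g x ∂(ν n)|
          ≤ ∫ x in (Set.Icc (-M) M)ᶜ, |g x| ∂(ν n) := by
            simpa [Real.norm_eq_abs] using
              norm_integral_le_integral_norm (μ := (ν n).restrict (Set.Icc (-M) M)ᶜ) g
        _ ≤ ∫ x in (Set.Icc (-M) M)ᶜ, F * |x| ^ q'' ∂(ν n) := by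
            apply setIntegral_mono_on hgint.abs.integrableOn
              (((habs q'').const_mul F).integrableOn) measurableSet_Icc.compl
            exact hgtail
        _ = F * ∫ x in (Set.Icc (-M) M)ᶜ, |x| ^ q'' ∂(ν n) := integral_const_mul _ _
        _ ≤ F * ((∫ x, x ^ (2 * m) ∂(ν n)) / M ^ k) :=
            mul_le_mul_of_nonneg_left (tail_bound (ν n) (hint n) hM0 q'' k m hqk) hF0
        _ ≤ F * ((L + 1) / M ^ k) := by
            apply mul_le_mul_of_nonneg_left _ hF0
            exact (div_le_div_iff_of_pos_right hMk0).mpr hn1.le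
        _ = F * (L + 1) / M ^ k := by ring
    calc |∫ x, g x ∂(ν n)|
        ≤ |∫ x in Set.Icc (-M) M, g x ∂(ν n)| + |∫ x in (Set.Icc (-M) M)ᶜ, g x ∂(ν n)| := by
          rw [← hsplit]; exact abs_add_le _ _
      _ ≤ ε / 5 + F * (L + 1) / M ^ k := add_le_add hb1 hb2
  -- combine
  have htri : |((∫ x, g x ∂(ν n)) + ∫ x, P.eval x ∂(ν n))
      - ((∫ x, g x ∂νlim) + ∫ x, P.eval x ∂νlim)|
      ≤ |∫ x, g x ∂(ν n)| + |∫ x, g x ∂νlim|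
        + |(∫ x, P.eval x ∂(ν n)) - ∫ x, P.eval x ∂νlim| := by
    have : ((∫ x, g x ∂(ν n)) + ∫ x, P.eval x ∂(ν n))
        - ((∫ x, g x ∂νlim) + ∫ x, P.eval x ∂νlim)
        = (∫ x, g x ∂(ν n)) + (-(∫ x, g x ∂νlim))
          + ((∫ x, P.eval x ∂(ν n)) - ∫ x, P.eval x ∂νlim) := by ring
    rw [this]
    calc |(∫ x, g x ∂(ν n)) + (-(∫ x, g x ∂νlim))
          + ((∫ x, P.eval x ∂(ν n)) - ∫ x, P.eval x ∂νlim)|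
        ≤ |(∫ x, g x ∂(ν n)) + (-(∫ x, g x ∂νlim))|
          + |(∫ x, P.eval x ∂(ν n)) - ∫ x, P.eval x ∂νlim| := abs_add_le _ _
      _ ≤ |∫ x, g x ∂(ν n)| + |∫ x, g x ∂νlim|
          + |(∫ x, P.eval x ∂(ν n)) - ∫ x, P.eval x ∂νlim| := by
            have := abs_add_le (∫ x, g x ∂(ν n)) (-(∫ x, g x ∂νlim))
            rw [abs_neg] at this
            linarith
  calc |((∫ x, g x ∂(ν n)) + ∫ x, P.eval x ∂(ν n))
      - ((∫ x, g x ∂νlim) + ∫ x, P.eval x ∂νlim)|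
      ≤ |∫ x, g x ∂(ν n)| + |∫ x, g x ∂νlim|
        + |(∫ x, P.eval x ∂(ν n)) - ∫ x, P.eval x ∂νlim| := htri
    _ < (ε / 5 + F * (L + 1) / M ^ k) + ε / 5 + ε / 5 := by
        linarith [hgn, hglim, hn2]
    _ < ε := by linarith [hkey]
end

section
/- Let γ₂ = (p, p−1, …, 1)(2p, 2p−1, …, p+1) ∈ S_{2p}. A permutation α ∈ S_{2p} satisfies |α| + |γ₂⁻¹α| = |γ₂| = 2p−2 if and only if α decomposes as α = α′ ⊕ α″ with α′ ∈ S{1,…,p}, α″ ∈ S{p+1,…,2p}, where α′ and α″ lie on the geodesics from the identity to the respective p-cycles; moreover in that case #α = #α′ + #α″. -/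
open Equiv

/-- `γ₂ = (p ⋯ 2 1)(2p ⋯ p+2 p+1)`, a product of two disjoint descending `p`-cycles. -/
def gammaTwo (p : ℕ) : Perm (Fin p ⊕ Fin p) :=
  Equiv.sumCongr ((finRotate p)⁻¹) ((finRotate p)⁻¹)

set_option linter.unusedSectionVars false

namespace GeoAux
open Equiv.Perm

variable {β : Type*} [Fintype β] [DecidableEq β]

abbrev sc (σ : Perm β) : Setoid β := Equiv.Perm.SameCycle.setoid σ

omit [Fintype β] [DecidableEq β] in
lemma sc_r {σ : Perm β} {x y : β} : (sc σ).r x y ↔ σ.SameCycle x y := Iff.rfl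

noncomputable def q (σ : Perm β) : ℕ := Nat.card (Quotient (sc σ))

lemma sameCycle_fixed {σ : Perm β} {x y : β} (h : σ.SameCycle x y) (hx : x ∉ σ.support) :
    y = x := by
  obtain ⟨i, hi⟩ := h
  rw [← hi, zpow_apply_eq_self_of_apply_eq_self (Equiv.Perm.notMem_support.mp hx)]

lemma q_eq (σ : Perm β) : q σ = numCycles σ := by
  classical
  set T : Finset (Perm β ⊕ β) :=
    σ.cycleFactorsFinset.map ⟨Sum.inl, Sum.inl_injective⟩ ∪
      σ.supportᶜ.map ⟨Sum.inr, Sum.inr_injective⟩ with hT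
  have hwd : ∀ x y : β, σ.SameCycle x y →
      (if x ∈ σ.support then (Sum.inl (σ.cycleOf x) : Perm β ⊕ β) else Sum.inr x) =
      (if y ∈ σ.support then Sum.inl (σ.cycleOf y) else Sum.inr y) := by
    intro x y h
    by_cases hx : x ∈ σ.support
    · have hy : y ∈ σ.support := by
        by_contra hy
        rw [sameCycle_fixed h.symm hy] at hx
        exact hy hx
      rw [if_pos hx, if_pos hy, h.cycleOf_eq]
    · have hxy := sameCycle_fixed h hx
      subst hxy
      rfl
  set f : Quotient (sc σ) → (Perm β ⊕ β) :=
    Quotient.lift _ hwd with hf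
  have happ : ∀ x : β, f ⟦x⟧ =
      (if x ∈ σ.support then (Sum.inl (σ.cycleOf x) : Perm β ⊕ β) else Sum.inr x) :=
    fun x => rfl
  have hinj : Function.Injective f := by
    intro c d
    induction c using Quotient.ind
    induction d using Quotient.ind
    rename_i x y
    intro hfe
    rw [happ, happ] at hfe
    apply Quotient.sound
    by_cases hx : x ∈ σ.support <;> by_cases hy : y ∈ σ.support <;>
      simp only [if_pos, if_neg, hx, hy, if_true, if_false] at hfe
    · -- cycleOf equal
      have : y ∈ (σ.cycleOf x).support := by
        rw [Sum.inl.injEq] at hfe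
        rw [hfe]
        exact Equiv.Perm.mem_support_cycleOf_iff.mpr ⟨SameCycle.refl _ _, hy⟩
      exact (Equiv.Perm.mem_support_cycleOf_iff.mp this).1
    · exact absurd hfe (by simp)
    · exact absurd hfe (by simp)
    · rw [Sum.inr.injEq] at hfe
      exact hfe ▸ SameCycle.refl _ _
  have hrange : Set.range f = ↑T := by
    ext t
    constructor
    · rintro ⟨c, rfl⟩
      induction c using Quotient.ind
      rename_i x
      rw [happ]
      by_cases hx : x ∈ σ.support
      · rw [if_pos hx]
        simp only [hT, Finset.coe_union, Set.mem_union, Finset.coe_map, Set.mem_image]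
        left
        exact ⟨σ.cycleOf x, by simpa using Equiv.Perm.cycleOf_mem_cycleFactorsFinset_iff.mpr hx, rfl⟩
      · rw [if_neg hx]
        simp only [hT, Finset.coe_union, Set.mem_union, Finset.coe_map, Set.mem_image]
        right
        exact ⟨x, by simpa using hx, rfl⟩
    · intro ht
      simp only [hT, Finset.coe_union, Set.mem_union, Finset.coe_map, Set.mem_image,
        Finset.mem_coe] at ht
      rcases ht with ⟨c, hc, rfl⟩ | ⟨x, hx, rfl⟩
      · simp only [Function.Embedding.coeFn_mk] at *
        have hcyc : c.IsCycle := (Equiv.Perm.mem_cycleFactorsFinset_iff.mp hc).1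
        obtain ⟨x, hx, -⟩ := hcyc
        have hxc : x ∈ c.support := Equiv.Perm.mem_support.mpr hx
        have hxs : x ∈ σ.support := by
          rw [Equiv.Perm.mem_support]
          rw [← (Equiv.Perm.mem_cycleFactorsFinset_iff.mp hc).2 x hxc]
          exact hx
        refine ⟨⟦x⟧, ?_⟩
        rw [happ, if_pos hxs, ← Equiv.Perm.cycle_is_cycleOf hxc hc]
      · simp only [Function.Embedding.coeFn_mk, Finset.mem_compl] at *
        exact ⟨⟦x⟧, by rw [happ, if_neg hx]⟩
  have hcard : q σ = T.card := by
    have h1 : q σ = Nat.card (Set.range f) :=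
      Nat.card_congr (Equiv.ofInjective f hinj)
    rw [h1, hrange]
    simp [Nat.card_eq_finsetCard]
  rw [hcard, hT]
  rw [Finset.card_union_of_disjoint (by simp [Finset.disjoint_left])]
  rw [Finset.card_map, Finset.card_map, Finset.card_compl]
  congr 1
  rw [Equiv.Perm.cycleType_def]
  simp




/-- Merge the classes of `a` and `b` in a setoid. -/
def merge {γ : Type*} (S : Setoid γ) (a b : γ) : Setoid γ where
  r x y := S.r x y ∨ (S.r x a ∧ S.r b y) ∨ (S.r x b ∧ S.r a y)
  iseqv := by
    constructor
    · intro x; exact Or.inl (S.refl x)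
    · rintro x y (h | ⟨h1, h2⟩ | ⟨h1, h2⟩)
      · exact Or.inl (S.symm h)
      · exact Or.inr (Or.inr ⟨S.symm h2, S.symm h1⟩)
      · exact Or.inr (Or.inl ⟨S.symm h2, S.symm h1⟩)
    · rintro x y z (h | ⟨h1, h2⟩ | ⟨h1, h2⟩) (g | ⟨g1, g2⟩ | ⟨g1, g2⟩)
      · exact Or.inl (S.trans h g)
      · exact Or.inr (Or.inl ⟨S.trans h g1, g2⟩)
      · exact Or.inr (Or.inr ⟨S.trans h g1, g2⟩)
      · exact Or.inr (Or.inl ⟨h1, S.trans h2 g⟩)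
      · exact Or.inr (Or.inl ⟨h1, g2⟩)
      · exact Or.inl (S.trans h1 g2)
      · exact Or.inr (Or.inr ⟨h1, S.trans h2 g⟩)
      · exact Or.inl (S.trans h1 g2)
      · exact Or.inr (Or.inr ⟨h1, g2⟩)

omit [Fintype β] [DecidableEq β] in
lemma merge_le {S : Setoid β} {a b x y : β} (h : S.r x y) : (merge S a b).r x y := Or.inl h

omit [Fintype β] [DecidableEq β] in
lemma merge_mono {S S' : Setoid β} {a b : β} (h : ∀ x y, S.r x y → S'.r x y) :
    ∀ x y, (merge S a b).r x y → (merge S' a b).r x y := by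
  rintro x y (g | ⟨g1, g2⟩ | ⟨g1, g2⟩)
  · exact Or.inl (h _ _ g)
  · exact Or.inr (Or.inl ⟨h _ _ g1, h _ _ g2⟩)
  · exact Or.inr (Or.inr ⟨h _ _ g1, h _ _ g2⟩)

/-- Coarsening a setoid gives at most as many classes. -/
lemma card_quot_le_of_le {S S' : Setoid β} (h : ∀ x y, S.r x y → S'.r x y) :
    Nat.card (Quotient S') ≤ Nat.card (Quotient S) := by
  apply Nat.card_le_card_of_surjective
    (f := fun c => Quotient.liftOn c (fun x => (Quotient.mk S' x : Quotient S'))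
      (fun x y hxy => Quotient.sound (h x y hxy)))
  intro c
  induction c using Quotient.ind
  rename_i x
  exact ⟨Quotient.mk S x, rfl⟩

/-- Merging loses at most one class. -/
lemma card_quot_merge {S : Setoid β} {a b : β} :
    Nat.card (Quotient S) ≤ Nat.card (Quotient (merge S a b)) + 1 := by
  classical
  set π : Quotient S → Quotient (merge S a b) :=
    fun c => Quotient.liftOn c (fun x => (Quotient.mk (merge S a b) x))
      (fun x y hxy => Quotient.sound (merge_le hxy)) with hπ
  set g : Quotient S → Quotient (merge S a b) ⊕ Unit :=
    fun c => if c = Quotient.mk S b then Sum.inr () else Sum.inl (π c) with hg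
  have hinj : Function.Injective g := by
    intro c d hcd
    obtain ⟨x, rfl⟩ := Quotient.exists_rep c
    obtain ⟨y, rfl⟩ := Quotient.exists_rep d
    simp only [hg] at hcd
    by_cases hc : (Quotient.mk S x : Quotient S) = Quotient.mk S b <;>
      by_cases hd : (Quotient.mk S y : Quotient S) = Quotient.mk S b
    · rw [hc, hd]
    · rw [if_pos hc, if_neg hd] at hcd; exact absurd hcd (by simp)
    · rw [if_neg hc, if_pos hd] at hcd; exact absurd hcd (by simp)
    · rw [if_neg hc, if_neg hd, Sum.inl.injEq] at hcd
      have hm : (merge S a b).r x y := Quotient.exact hcd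
      rcases hm with h | ⟨h1, h2⟩ | ⟨h1, h2⟩
      · exact Quotient.sound h
      · exact absurd (Quotient.sound (S.symm h2)) hd
      · exact absurd (Quotient.sound h1) hc
  calc Nat.card (Quotient S) ≤ Nat.card (Quotient (merge S a b) ⊕ Unit) :=
        Nat.card_le_card_of_injective g hinj
    _ = Nat.card (Quotient (merge S a b)) + 1 := by simp [Nat.card_sum]


lemma sameCycle_induct {σ : Perm β} {S : Setoid β} (hstep : ∀ y, S.r y (σ y)) :
    ∀ x y, σ.SameCycle x y → S.r x y := by
  intro x y h
  obtain ⟨i, -, rfl⟩ := h.exists_pow_eq'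
  clear h
  induction i with
  | zero => exact S.refl x
  | succ n ih =>
      rw [pow_succ']
      exact S.trans ih (hstep _)

lemma step_rel {S : Setoid β} {ρ : Perm β} {a b : β}
    (hS : ∀ x y, ρ.SameCycle x y → S.r x y) :
    ∀ x y, (Equiv.swap a b * ρ).SameCycle x y → (merge S a b).r x y := by
  apply sameCycle_induct
  intro y
  have hy : S.r y (ρ y) := hS _ _ ⟨1, by simp⟩
  show (merge S a b).r y (Equiv.swap a b (ρ y))
  by_cases h1 : ρ y = a
  · rw [h1, Equiv.swap_apply_left]
    exact Or.inr (Or.inl ⟨h1 ▸ hy, S.refl b⟩)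
  · by_cases h2 : ρ y = b
    · rw [h2, Equiv.swap_apply_right]
      exact Or.inr (Or.inr ⟨h2 ▸ hy, S.refl a⟩)
    · rw [Equiv.swap_apply_of_ne_of_ne h1 h2]
      exact Or.inl hy

lemma numCycles_swap_mul {σ : Perm β} {x : β} (hx : σ x ≠ x) :
    numCycles (Equiv.swap x (σ x) * σ) = numCycles σ + 1 := by
  classical
  set τ := Equiv.swap x (σ x) * σ with hτ
  have hτx : τ x = x := by
    simp [hτ, Equiv.Perm.mul_apply, Equiv.swap_apply_right]
  have href : ∀ y z, τ.SameCycle y z → σ.SameCycle y z := by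
    apply sameCycle_induct (S := sc σ)
    intro y
    show σ.SameCycle y (τ y)
    by_cases h2 : σ y = σ x
    · have hyx : y = x := σ.injective h2
      rw [hyx, hτx]
    · by_cases h1 : σ y = x
      · have : τ y = σ x := by
          simp [hτ, Equiv.Perm.mul_apply, h1, Equiv.swap_apply_left]
        rw [this]
        exact Equiv.Perm.SameCycle.trans ⟨1, by simpa using h1⟩ ⟨1, by simp⟩
      · have : τ y = σ y := by
          simp [hτ, Equiv.Perm.mul_apply, Equiv.swap_apply_of_ne_of_ne h1 h2]
        rw [this]
        exact ⟨1, by simp⟩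
  have hle : q τ ≤ q σ + 1 := by
    have hστ : σ = Equiv.swap x (σ x) * τ := by
      rw [hτ, ← mul_assoc, Equiv.swap_mul_self, one_mul]
    have hstep : ∀ y z, σ.SameCycle y z → (merge (sc τ) x (σ x)).r y z := by
      intro y z h
      exact step_rel (fun _ _ h => h) y z (hστ ▸ h)
    have c1 : Nat.card (Quotient (merge (sc τ) x (σ x))) ≤ q σ :=
      card_quot_le_of_le hstep
    have c2 : q τ ≤ Nat.card (Quotient (merge (sc τ) x (σ x))) + 1 := card_quot_merge
    omega
  have hge : q σ + 1 ≤ q τ := by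
    set φ : Quotient (sc τ) → Quotient (sc σ) :=
      fun c => Quotient.liftOn c (fun y => (Quotient.mk (sc σ) y))
        (fun y z h => Quotient.sound (href y z h)) with hφ
    have hsurj : Function.Surjective φ := by
      intro c
      obtain ⟨y, rfl⟩ := Quotient.exists_rep c
      exact ⟨Quotient.mk (sc τ) y, rfl⟩
    have hnotinj : ¬ Function.Injective φ := by
      intro hi
      have hx2 : ¬ τ.SameCycle x (σ x) := by
        intro h
        obtain ⟨i, -, hi2⟩ := h.exists_pow_eq'
        have hfix : ∀ j : ℕ, (τ ^ j) x = x := by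
          intro j
          induction j with
          | zero => rfl
          | succ n ih => rw [pow_succ, Equiv.Perm.mul_apply, hτx, ih]
        exact hx (by rw [← hi2, hfix])
      have heq : φ (Quotient.mk (sc τ) x) = φ (Quotient.mk (sc τ) (σ x)) :=
        Quotient.sound (⟨1, by simp⟩ : σ.SameCycle x (σ x))
      exact hx2 (Quotient.exact (hi heq))
    letI : Fintype (Quotient (sc τ)) := Fintype.ofFinite _
    letI : Fintype (Quotient (sc σ)) := Fintype.ofFinite _
    have := Fintype.card_lt_of_surjective_not_injective φ hsurj hnotinj
    simp only [q, Nat.card_eq_fintype_card]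
    omega
  have : q τ = q σ + 1 := le_antisymm hle hge
  rw [q_eq, q_eq] at this
  exact this


lemma numCycles_one : numCycles (1 : Perm β) = Fintype.card β := by
  simp [numCycles, Equiv.Perm.cycleType_one, Equiv.Perm.support_one]

lemma two_mul_card_cycleType (σ : Perm β) :
    2 * σ.cycleType.card ≤ σ.support.card := by
  rw [← Equiv.Perm.sum_cycleType]
  calc 2 * σ.cycleType.card = σ.cycleType.card • 2 := by rw [smul_eq_mul]; ring
    _ ≤ σ.cycleType.sum :=
        Multiset.card_nsmul_le_sum fun x hx => Equiv.Perm.two_le_of_mem_cycleType hx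

lemma numCycles_le (σ : Perm β) : numCycles σ ≤ Fintype.card β := by
  have h1 := two_mul_card_cycleType σ
  have h2 : σ.support.card ≤ Fintype.card β := Finset.card_le_univ _
  simp only [numCycles]
  omega

lemma eq_one_of_numCycles_eq (σ : Perm β) (h : numCycles σ = Fintype.card β) : σ = 1 := by
  by_contra hne
  have h1 := two_mul_card_cycleType σ
  have h2 : σ.support.card ≤ Fintype.card β := Finset.card_le_univ _
  have h3 : 0 < σ.cycleType.card := Equiv.Perm.card_cycleType_pos.mpr hne
  simp only [numCycles] at h
  omega

def swapProd (L : List (β × β)) : Perm β := (L.map fun p => Equiv.swap p.1 p.2).prod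

lemma exists_swap_list (σ : Perm β) :
    ∃ L : List (β × β), swapProd L = σ ∧ L.length + numCycles σ = Fintype.card β := by
  generalize hk : Fintype.card β - numCycles σ = k
  induction k generalizing σ with
  | zero =>
      have h1 : numCycles σ = Fintype.card β := by
        have := numCycles_le σ; omega
      refine ⟨[], ?_, by simpa [swapProd] using h1 ▸ (eq_one_of_numCycles_eq σ h1 ▸ rfl)⟩
      rw [eq_one_of_numCycles_eq σ h1]; rfl
  | succ n ih =>
      have hne : σ ≠ 1 := by
        rintro rfl
        rw [numCycles_one] at hk
        omega
      have hex : ∃ x, σ x ≠ x := by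
        by_contra hall
        push_neg at hall
        exact hne (Equiv.ext hall)
      obtain ⟨x, hx⟩ := hex
      set τ := Equiv.swap x (σ x) * σ with hτ
      have hnc : numCycles τ = numCycles σ + 1 := numCycles_swap_mul hx
      have hkτ : Fintype.card β - numCycles τ = n := by
        have := numCycles_le τ; omega
      obtain ⟨L, hL1, hL2⟩ := ih τ hkτ
      refine ⟨(x, σ x) :: L, ?_, by simp; omega⟩
      show Equiv.swap x (σ x) * swapProd L = σ
      rw [hL1, hτ, ← mul_assoc, Equiv.swap_mul_self, one_mul]

def partFold (L : List (β × β)) (S : Setoid β) : Setoid β :=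
  L.foldr (fun p T => merge T p.1 p.2) S

omit [Fintype β] [DecidableEq β] in
lemma partFold_le {S : Setoid β} (L : List (β × β)) :
    ∀ x y, S.r x y → (partFold L S).r x y := by
  induction L with
  | nil => exact fun x y h => h
  | cons p L ih => exact fun x y h => merge_le (ih x y h)

lemma partFold_card (L : List (β × β)) (S : Setoid β) :
    Nat.card (Quotient S) ≤ Nat.card (Quotient (partFold L S)) + L.length := by
  induction L with
  | nil => simp [partFold]
  | cons p L ih =>
      have h2 : Nat.card (Quotient (partFold L S)) ≤
          Nat.card (Quotient (partFold (p :: L) S)) + 1 := card_quot_merge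
      simp only [List.length_cons]
      omega

lemma step_fold {S : Setoid β} {ρ : Perm β} (hS : ∀ x y, ρ.SameCycle x y → S.r x y)
    (L : List (β × β)) :
    ∀ x y, (swapProd L * ρ).SameCycle x y → (partFold L S).r x y := by
  induction L with
  | nil =>
      intro x y h
      rw [show swapProd [] * ρ = ρ by simp [swapProd]] at h
      exact hS x y h
  | cons p L ih =>
      intro x y h
      rw [show swapProd (p :: L) * ρ = Equiv.swap p.1 p.2 * (swapProd L * ρ) by
        simp [swapProd, mul_assoc]] at h
      exact step_rel ih x y h

lemma numCycles_triangle (σ τ : Perm β) :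
    numCycles σ + numCycles τ ≤ numCycles (σ * τ) + Fintype.card β := by
  obtain ⟨Lσ, hLσ, hlσ⟩ := exists_swap_list σ
  obtain ⟨Lτ, hLτ, hlτ⟩ := exists_swap_list τ
  set S0 := sc (1 : Perm β)
  set S1 := partFold Lτ S0
  set J := partFold Lσ S1
  have hb : ∀ x y, (1 : Perm β).SameCycle x y → S0.r x y := fun _ _ h => h
  have hτJ : ∀ x y, τ.SameCycle x y → S1.r x y := by
    intro x y h
    exact step_fold hb Lτ x y (by rwa [hLτ, mul_one])
  have hστ : ∀ x y, (σ * τ).SameCycle x y → J.r x y := by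
    intro x y h
    exact step_fold hτJ Lσ x y (by rwa [hLσ])
  have c0 : Nat.card (Quotient S0) ≤ Nat.card (Quotient S1) + Lτ.length :=
    partFold_card _ _
  have c1 : Nat.card (Quotient S1) ≤ Nat.card (Quotient J) + Lσ.length :=
    partFold_card _ _
  have c2 : Nat.card (Quotient J) ≤ q (σ * τ) := card_quot_le_of_le hστ
  have c3 : Nat.card (Quotient S0) = Fintype.card β := by
    show q (1 : Perm β) = _
    rw [q_eq, numCycles_one]
  have c4 : q (σ * τ) = numCycles (σ * τ) := q_eq _
  omega

lemma key_orbit {σ τ : Perm β}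
    (h : numCycles σ + numCycles τ = numCycles (σ * τ) + Fintype.card β) :
    ∀ x y, σ.SameCycle x y → (σ * τ).SameCycle x y := by
  obtain ⟨Lσ, hLσ, hlσ⟩ := exists_swap_list σ
  obtain ⟨Lτ, hLτ, hlτ⟩ := exists_swap_list τ
  set S0 := sc (1 : Perm β) with hS0
  set S1 := partFold Lτ S0 with hS1
  set J := partFold Lσ S1 with hJ
  have hb : ∀ x y, (1 : Perm β).SameCycle x y → S0.r x y := fun _ _ h => h
  have hτJ : ∀ x y, τ.SameCycle x y → S1.r x y := by
    intro x y h
    exact step_fold hb Lτ x y (by rwa [hLτ, mul_one])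
  have hστ : ∀ x y, (σ * τ).SameCycle x y → J.r x y := by
    intro x y h
    exact step_fold hτJ Lσ x y (by rwa [hLσ])
  have hσJ : ∀ x y, σ.SameCycle x y → J.r x y := by
    intro x y h
    have : ∀ x y, (1 : Perm β).SameCycle x y → S1.r x y := by
      intro x y h
      exact partFold_le Lτ x y (hb x y h)
    exact step_fold this Lσ x y (by rwa [hLσ, mul_one])
  have c0 : Nat.card (Quotient S0) ≤ Nat.card (Quotient S1) + Lτ.length :=
    partFold_card _ _
  have c1 : Nat.card (Quotient S1) ≤ Nat.card (Quotient J) + Lσ.length :=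
    partFold_card _ _
  have c2 : Nat.card (Quotient J) ≤ q (σ * τ) := card_quot_le_of_le hστ
  have c3 : Nat.card (Quotient S0) = Fintype.card β := by
    show q (1 : Perm β) = _
    rw [q_eq, numCycles_one]
  have c4 : q (σ * τ) = numCycles (σ * τ) := q_eq _
  have hcards : Nat.card (Quotient (sc (σ * τ))) = Nat.card (Quotient J) := by
    show q (σ * τ) = _
    omega
  set π : Quotient (sc (σ * τ)) → Quotient J :=
    fun c => Quotient.liftOn c (fun y => (Quotient.mk J y))
      (fun y z hyz => Quotient.sound (hστ y z hyz)) with hπ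
  have hsurj : Function.Surjective π := by
    intro c
    obtain ⟨y, rfl⟩ := Quotient.exists_rep c
    exact ⟨Quotient.mk _ y, rfl⟩
  have hbij : Function.Bijective π :=
    (Nat.bijective_iff_surjective_and_card π).mpr ⟨hsurj, hcards⟩
  intro x y hxy
  have : π (Quotient.mk _ x) = π (Quotient.mk _ y) := Quotient.sound (hσJ x y hxy)
  exact Quotient.exact (hbij.1 this)


section SumCongr
variable {γ : Type*} {δ : Type*} [Fintype γ] [DecidableEq γ] [Fintype δ] [DecidableEq δ]

lemma sumCongr_pow {γ' δ' : Type*} (f : Perm γ') (g : Perm δ') (n : ℕ) :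
    (Equiv.sumCongr f g) ^ n = Equiv.sumCongr (f ^ n) (g ^ n) := by
  induction n with
  | zero => simp [pow_zero]
  | succ n ih => rw [pow_succ, pow_succ, pow_succ, ih, Equiv.Perm.sumCongr_mul]

lemma sameCycle_sumCongr_inl {f : Perm γ} {g : Perm δ} {x y : γ} :
    Equiv.Perm.SameCycle (Equiv.sumCongr f g) (Sum.inl x) (Sum.inl y) ↔ f.SameCycle x y := by
  constructor
  · intro h
    obtain ⟨i, -, hi⟩ := h.exists_pow_eq'
    rw [sumCongr_pow] at hi
    simp only [Equiv.sumCongr_apply, Sum.map_inl, Sum.inl.injEq] at hi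
    exact ⟨(i : ℤ), by rw [zpow_natCast]; exact hi⟩
  · intro h
    obtain ⟨i, -, hi⟩ := h.exists_pow_eq'
    exact ⟨(i : ℤ), by rw [zpow_natCast, sumCongr_pow]; simp [hi]⟩

lemma sameCycle_sumCongr_inr {f : Perm γ} {g : Perm δ} {x y : δ} :
    Equiv.Perm.SameCycle (Equiv.sumCongr f g) (Sum.inr x) (Sum.inr y) ↔ g.SameCycle x y := by
  constructor
  · intro h
    obtain ⟨i, -, hi⟩ := h.exists_pow_eq'
    rw [sumCongr_pow] at hi
    simp only [Equiv.sumCongr_apply, Sum.map_inr, Sum.inr.injEq] at hi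
    exact ⟨(i : ℤ), by rw [zpow_natCast]; exact hi⟩
  · intro h
    obtain ⟨i, -, hi⟩ := h.exists_pow_eq'
    exact ⟨(i : ℤ), by rw [zpow_natCast, sumCongr_pow]; simp [hi]⟩

lemma not_sameCycle_inl_inr {f : Perm γ} {g : Perm δ} {x : γ} {y : δ} :
    ¬ Equiv.Perm.SameCycle (Equiv.sumCongr f g) (Sum.inl x) (Sum.inr y) := by
  intro h
  obtain ⟨i, -, hi⟩ := h.exists_pow_eq'
  rw [sumCongr_pow] at hi
  simp at hi

lemma numCycles_sumCongr (f : Perm γ) (g : Perm δ) :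
    numCycles (Equiv.sumCongr f g) = numCycles f + numCycles g := by
  classical
  rw [← q_eq, ← q_eq, ← q_eq]
  have e : Quotient (sc (Equiv.sumCongr f g)) ≃ (Quotient (sc f) ⊕ Quotient (sc g)) := by
    refine
      { toFun := Quotient.lift
          (fun s => Sum.elim (fun x => (Sum.inl (Quotient.mk (sc f) x) : Quotient (sc f) ⊕ Quotient (sc g)))
            (fun y => Sum.inr (Quotient.mk (sc g) y)) s) ?_
        invFun := Sum.elim
          (Quotient.lift (fun x => Quotient.mk (sc (Equiv.sumCongr f g)) (Sum.inl x))
            (fun x y h => Quotient.sound (sameCycle_sumCongr_inl.mpr h)))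
          (Quotient.lift (fun y => Quotient.mk (sc (Equiv.sumCongr f g)) (Sum.inr y))
            (fun x y h => Quotient.sound (sameCycle_sumCongr_inr.mpr h)))
        left_inv := ?_
        right_inv := ?_ }
    · rintro (x | x) (y | y) h
      · exact congrArg Sum.inl (Quotient.sound (sameCycle_sumCongr_inl.mp h))
      · exact absurd h not_sameCycle_inl_inr
      · exact absurd h.symm not_sameCycle_inl_inr
      · exact congrArg Sum.inr (Quotient.sound (sameCycle_sumCongr_inr.mp h))
    · intro c
      obtain ⟨s, rfl⟩ := Quotient.exists_rep c
      rcases s with x | y <;> rfl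
    · rintro (c | c) <;> (obtain ⟨x, rfl⟩ := Quotient.exists_rep c; rfl)
  rw [q, Nat.card_congr e, Nat.card_sum]
  rfl

end SumCongr

lemma numCycles_inv (σ : Perm β) : numCycles σ⁻¹ = numCycles σ := by
  simp [numCycles, Equiv.Perm.cycleType_inv, Equiv.Perm.support_inv]

lemma numCycles_finRotate (p : ℕ) (hp : 0 < p) : numCycles (finRotate p) = 1 := by
  rcases Nat.lt_or_ge p 2 with h | h
  · have hp1 : p = 1 := by omega
    subst hp1
    have h1 : (finRotate 1) = 1 := Subsingleton.elim _ _
    rw [h1]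
    simpa using numCycles_one (β := Fin 1)
  · have hc := isCycle_finRotate_of_le h
    have hs := support_finRotate_of_le h
    simp [numCycles, hc.cycleType, hs]


end GeoAux

/-- `|α| + |γ₂⁻¹α| = |γ₂| = 2p−2` iff `α = α' ⊕ α''` with `α', α''` on the geodesics
from the identity to the respective `p`-cycles; in that case `#α = #α' + #α''`. -/
theorem geodesic_to_gammaTwo (p : ℕ) (hp : 0 < p) :
    permLength (gammaTwo p) = 2 * p - 2 ∧
    ∀ α : Perm (Fin p ⊕ Fin p),
      permLength α + permLength ((gammaTwo p)⁻¹ * α) = 2 * p - 2 ↔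
      ∃ α' α'' : Perm (Fin p), α = Equiv.sumCongr α' α'' ∧
        permLength α' + permLength (α'⁻¹ * (finRotate p)⁻¹)
          = permLength ((finRotate p)⁻¹) ∧
        permLength α'' + permLength (α''⁻¹ * (finRotate p)⁻¹)
          = permLength ((finRotate p)⁻¹) ∧
        numCycles α = numCycles α' + numCycles α'' := by
  classical
  have hcard : Fintype.card (Fin p ⊕ Fin p) = 2 * p := by
    simp [Fintype.card_sum]; ring
  set r : Perm (Fin p) := (finRotate p)⁻¹ with hr
  have hncr : numCycles r = 1 := by
    rw [hr, GeoAux.numCycles_inv, GeoAux.numCycles_finRotate p hp]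
  have hplr : permLength r = p - 1 := by
    simp [permLength, hncr]
  have hγ : gammaTwo p = Equiv.sumCongr r r := rfl
  have hncγ : numCycles (gammaTwo p) = 2 := by
    rw [hγ, GeoAux.numCycles_sumCongr, hncr]
  refine ⟨by simp [permLength, hncγ, hcard], ?_⟩
  intro α
  constructor
  · -- forward
    intro h
    set τ := α⁻¹ * gammaTwo p with hτ
    have hprod : α * τ = gammaTwo p := by rw [hτ, mul_inv_cancel_left]
    have hinv : (gammaTwo p)⁻¹ * α = τ⁻¹ := by rw [hτ]; simp [mul_inv_rev]
    have hncB : numCycles ((gammaTwo p)⁻¹ * α) = numCycles τ := by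
      rw [hinv, GeoAux.numCycles_inv]
    -- numbers
    have hA := GeoAux.numCycles_le α
    have hB := GeoAux.numCycles_le ((gammaTwo p)⁻¹ * α)
    rw [hcard] at hA hB
    have hkeyhyp : numCycles α + numCycles τ
        = numCycles (α * τ) + Fintype.card (Fin p ⊕ Fin p) := by
      rw [hprod, hncγ, hcard]
      simp only [permLength, hcard, hncγ] at h
      omega
    have horbit := GeoAux.key_orbit hkeyhyp
    rw [hprod] at horbit
    -- block preservation
    have hAexists : ∀ i : Fin p, ∃ j, α (Sum.inl i) = Sum.inl j := by
      intro i
      have h1 : α.SameCycle (Sum.inl i) (α (Sum.inl i)) := ⟨1, by simp⟩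
      have h2 := horbit _ _ h1
      rcases hx : α (Sum.inl i) with j | j
      · exact ⟨j, rfl⟩
      · rw [hx, hγ] at h2
        exact absurd h2 GeoAux.not_sameCycle_inl_inr
    have hBexists : ∀ i : Fin p, ∃ j, α (Sum.inr i) = Sum.inr j := by
      intro i
      have h1 : α.SameCycle (Sum.inr i) (α (Sum.inr i)) := ⟨1, by simp⟩
      have h2 := horbit _ _ h1
      rcases hx : α (Sum.inr i) with j | j
      · rw [hx, hγ] at h2
        exact absurd h2.symm GeoAux.not_sameCycle_inl_inr
      · exact ⟨j, rfl⟩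
    choose F hF using hAexists
    choose G hG using hBexists
    have hFinj : Function.Injective F := by
      intro i j hij
      have : α (Sum.inl i) = α (Sum.inl j) := by rw [hF i, hF j, hij]
      exact Sum.inl_injective (α.injective this)
    have hGinj : Function.Injective G := by
      intro i j hij
      have : α (Sum.inr i) = α (Sum.inr j) := by rw [hG i, hG j, hij]
      exact Sum.inr_injective (α.injective this)
    set α' : Perm (Fin p) := Equiv.ofBijective F (Finite.injective_iff_bijective.mp hFinj)
      with hα'
    set α'' : Perm (Fin p) := Equiv.ofBijective G (Finite.injective_iff_bijective.mp hGinj)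
      with hα''
    have hdecomp : α = Equiv.sumCongr α' α'' := by
      apply Equiv.ext
      rintro (i | i)
      · simpa [hα', Equiv.ofBijective_apply] using hF i
      · simpa [hα'', Equiv.ofBijective_apply] using hG i
    refine ⟨α', α'', hdecomp, ?_, ?_, ?_⟩
    all_goals {
      have hncα : numCycles α = numCycles α' + numCycles α'' := by
        rw [hdecomp, GeoAux.numCycles_sumCongr]
      have hτdec : (gammaTwo p)⁻¹ * α = Equiv.sumCongr (r⁻¹ * α') (r⁻¹ * α'') := by
        rw [hγ, hdecomp, Equiv.Perm.sumCongr_inv, Equiv.Perm.sumCongr_mul]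
      have hncτdec : numCycles ((gammaTwo p)⁻¹ * α)
          = numCycles (r⁻¹ * α') + numCycles (r⁻¹ * α'') := by
        rw [hτdec, GeoAux.numCycles_sumCongr]
      have hinv1 : numCycles (α'⁻¹ * r) = numCycles (r⁻¹ * α') := by
        rw [← GeoAux.numCycles_inv (α'⁻¹ * r)]; simp only [mul_inv_rev, inv_inv]
      have hinv2 : numCycles (α''⁻¹ * r) = numCycles (r⁻¹ * α'') := by
        rw [← GeoAux.numCycles_inv (α''⁻¹ * r)]; simp only [mul_inv_rev, inv_inv]
      have ht1 : numCycles α' + numCycles (α'⁻¹ * r)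
          ≤ numCycles (α' * (α'⁻¹ * r)) + Fintype.card (Fin p) :=
        GeoAux.numCycles_triangle _ _
      have ht2 : numCycles α'' + numCycles (α''⁻¹ * r)
          ≤ numCycles (α'' * (α''⁻¹ * r)) + Fintype.card (Fin p) :=
        GeoAux.numCycles_triangle _ _
      rw [mul_inv_cancel_left, hncr, Fintype.card_fin] at ht1 ht2
      have hb1 := GeoAux.numCycles_le α'
      have hb2 := GeoAux.numCycles_le α''
      have hb3 := GeoAux.numCycles_le (α'⁻¹ * r)
      have hb4 := GeoAux.numCycles_le (α''⁻¹ * r)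
      rw [Fintype.card_fin] at hb1 hb2 hb3 hb4
      simp only [permLength, hcard, Fintype.card_fin, hncr] at h ⊢
      omega
    }
  · -- backward
    rintro ⟨α', α'', rfl, h1, h2, -⟩
    have hncα : numCycles (Equiv.sumCongr α' α'') = numCycles α' + numCycles α'' :=
      GeoAux.numCycles_sumCongr _ _
    have hτdec : (gammaTwo p)⁻¹ * (Equiv.sumCongr α' α'')
        = Equiv.sumCongr (r⁻¹ * α') (r⁻¹ * α'') := by
      rw [hγ, Equiv.Perm.sumCongr_inv, Equiv.Perm.sumCongr_mul]
    have hncτdec : numCycles ((gammaTwo p)⁻¹ * (Equiv.sumCongr α' α''))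
        = numCycles (r⁻¹ * α') + numCycles (r⁻¹ * α'') := by
      rw [hτdec, GeoAux.numCycles_sumCongr]
    have hinv1 : numCycles (α'⁻¹ * r) = numCycles (r⁻¹ * α') := by
      rw [← GeoAux.numCycles_inv (α'⁻¹ * r)]; simp only [mul_inv_rev, inv_inv]
    have hinv2 : numCycles (α''⁻¹ * r) = numCycles (r⁻¹ * α'') := by
      rw [← GeoAux.numCycles_inv (α''⁻¹ * r)]; simp only [mul_inv_rev, inv_inv]
    have hb1 := GeoAux.numCycles_le α'
    have hb2 := GeoAux.numCycles_le α''
    have hb3 := GeoAux.numCycles_le (α'⁻¹ * r)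
    have hb4 := GeoAux.numCycles_le (α''⁻¹ * r)
    rw [Fintype.card_fin] at hb1 hb2 hb3 hb4
    simp only [permLength, hcard, Fintype.card_fin, hncr] at h1 h2 ⊢
    omega
end
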